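/- Let M and M' be odd matchings of a finite simple graph G such that M can be reconfigured to M', and let v_M be the isolated vertex of M. Then for every cycle C of G all of whose edges belong to the symmetric difference M △ M', there exists a vertex v on C such that G contains an M-alternating path connecting v and v_M. -/

import Mathlib

/-- A vertex `v` is covered by the matching `M` if some edge of `M` contains it. -/
def Covers {V : Type*} (M : Set (Sym2 V)) (v : V) : Prop := ∃ e ∈ M, v ∈ e

/-- `M` is a matching of `G`: a set of edges of `G`, no two of which share a vertex. -/
def IsMatchingOn {V : Type*} (G : SimpleGraph V) (M : Set (Sym2 V)) : Prop :=
  M ⊆ G.edgeSet ∧ ∀ e ∈ M, ∀ f ∈ M, e ≠ f → ∀ v : V, v ∈ e → v ∉ f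

/-- `M` is an odd matching of `G`: a matching such that exactly one vertex is uncovered. -/
def IsOddMatching {V : Type*} (G : SimpleGraph V) (M : Set (Sym2 V)) : Prop :=
  IsMatchingOn G M ∧ ∃! v : V, ¬ Covers M v

/-- A flip transforms the odd matching `M` with isolated vertex `u` into
`M' = (M \ {vw}) ∪ {uv}`, where `uv` is an edge of `G` and `vw` is an edge of `M`. -/
def Flip {V : Type*} (G : SimpleGraph V) (M M' : Set (Sym2 V)) : Prop :=
  IsOddMatching G M ∧
  ∃ u v w : V, ¬ Covers M u ∧ s(u, v) ∈ G.edgeSet ∧ s(v, w) ∈ M ∧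
    M' = (M \ {s(v, w)}) ∪ {s(u, v)}

/-- `M` can be reconfigured to `M'` by some finite sequence of flips. -/
def Reconfig {V : Type*} (G : SimpleGraph V) (M M' : Set (Sym2 V)) : Prop :=
  Relation.ReflTransGen (Flip G) M M'

/-- `G` is reconfigurable: every odd matching can be reconfigured to every other one. -/
def Reconfigurable {V : Type*} (G : SimpleGraph V) : Prop :=
  ∀ M M' : Set (Sym2 V), IsOddMatching G M → IsOddMatching G M' → Reconfig G M M'

/-- `M` can be transformed into `M'` by a flip sequence of length exactly `k`. -/
def FlipSeq {V : Type*} (G : SimpleGraph V) (M M' : Set (Sym2 V)) (k : ℕ) : Prop :=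
  ∃ f : ℕ → Set (Sym2 V), f 0 = M ∧ f k = M' ∧ ∀ i < k, Flip G (f i) (f (i + 1))

/-- The graph obtained from `G` by deleting the vertex set `s` has a perfect matching:
a matching of `G` avoiding the vertices of `s` and covering all other vertices. -/
def HasPerfectMatchingAvoiding {V : Type*} (G : SimpleGraph V) (s : Set V) : Prop :=
  ∃ M : Set (Sym2 V), IsMatchingOn G M ∧ (∀ e ∈ M, ∀ v : V, v ∈ e → v ∉ s) ∧
    ∀ v : V, v ∉ s → Covers M v

namespace Stmt4Aux

open SimpleGraph List

variable {V : Type*} {G : SimpleGraph V}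

abbrev Alt (M : Set (Sym2 V)) (e f : Sym2 V) : Prop := e ∈ M ↔ f ∉ M

lemma matched_eq {M : Set (Sym2 V)} (hmat : IsMatchingOn G M) {e f : Sym2 V} {x : V}
    (he : e ∈ M) (hf : f ∈ M) (hx : x ∈ e) (hx' : x ∈ f) : e = f := by
  by_contra h
  exact hmat.2 e he f hf h x hx hx'

lemma chain'_alt_reverse {M : Set (Sym2 V)} {l : List (Sym2 V)}
    (h : List.Chain' (Alt M) l) : List.Chain' (Alt M) l.reverse := by
  unfold List.Chain' at h ⊢; rw [List.isChain_reverse]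
  exact h.imp (fun a b hab => by show b ∈ M ↔ a ∉ M; unfold Alt at hab; tauto)

lemma chain'_transfer (M N : Set (Sym2 V)) :
    ∀ (l : List (Sym2 V)), (∀ e ∈ l, (e ∈ M ↔ e ∈ N)) →
      List.Chain' (Alt N) l → List.Chain' (Alt M) l := by
  intro l
  induction l with
  | nil => intro _ _; simp [List.Chain']
  | cons a l ih =>
    intro hm h
    cases l with
    | nil => simp [List.Chain']
    | cons b l' =>
      unfold List.Chain' at h ⊢; rw [List.isChain_cons_cons] at h ⊢
      refine ⟨?_, ih (fun e he => hm e (List.mem_cons_of_mem a he)) h.2⟩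
      have ha := hm a (by simp)
      have hb := hm b (by simp)
      have h1 := h.1
      unfold Alt at *
      tauto

lemma exists_head_edge {a b : V} (p : G.Walk a b) (hab : a ≠ b) :
    ∃ y, y ∈ p.support ∧ s(a, y) ∈ p.edges ∧ p.edges.head? = some s(a, y) := by
  obtain ⟨y, hadj, q, hq⟩ := (SimpleGraph.Walk.not_nil_iff (p := p)).mp
    (SimpleGraph.Walk.not_nil_of_ne hab)
  refine ⟨y, ?_, ?_, ?_⟩
  · rw [hq, SimpleGraph.Walk.support_cons]
    exact List.mem_cons_of_mem _ q.start_mem_support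
  · rw [hq, SimpleGraph.Walk.edges_cons]
    exact List.mem_cons_self
  · rw [hq, SimpleGraph.Walk.edges_cons]
    rfl

lemma exists_getLast_edge {a b : V} (p : G.Walk a b) (hab : a ≠ b) :
    ∃ y, y ∈ p.support ∧ s(y, b) ∈ p.edges ∧ p.edges.getLast? = some s(y, b) := by
  obtain ⟨y, hadj, q, hq⟩ := (SimpleGraph.Walk.not_nil_iff (p := p.reverse)).mp
    (SimpleGraph.Walk.not_nil_of_ne (Ne.symm hab))
  have hmem : s(b, y) ∈ p.reverse.edges := by
    rw [hq, SimpleGraph.Walk.edges_cons]; exact List.mem_cons_self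
  have hsup : y ∈ p.reverse.support := by
    rw [hq, SimpleGraph.Walk.support_cons]
    exact List.mem_cons_of_mem _ q.start_mem_support
  refine ⟨y, ?_, ?_, ?_⟩
  · rwa [SimpleGraph.Walk.support_reverse, List.mem_reverse] at hsup
  · rw [Sym2.eq_swap]
    rwa [SimpleGraph.Walk.edges_reverse, List.mem_reverse] at hmem
  · rw [Sym2.eq_swap, ← List.head?_reverse, ← SimpleGraph.Walk.edges_reverse, hq,
      SimpleGraph.Walk.edges_cons]
    rfl

lemma exists_matched_edge [DecidableEq V] {N : Set (Sym2 V)} {a b c : V} (p : G.Walk a b)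
    (hch : List.Chain' (Alt N) p.edges) (hc : c ∈ p.support) (hca : c ≠ a) (hcb : c ≠ b) :
    ∃ e ∈ p.edges, c ∈ e ∧ e ∈ N := by
  obtain ⟨y, _, hyedge, hylast⟩ := exists_getLast_edge (p.takeUntil c hc) (Ne.symm hca)
  obtain ⟨z, _, hzedge, hzhead⟩ := exists_head_edge (p.dropUntil c hc) hcb
  have hsplit : p.edges = (p.takeUntil c hc).edges ++ (p.dropUntil c hc).edges := by
    rw [← SimpleGraph.Walk.edges_append, SimpleGraph.Walk.take_spec]
  rw [hsplit] at hch
  have hrel := (List.isChain_append.mp hch).2.2 s(y, c) (by rw [hylast]; rfl)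
      s(c, z) (by rw [hzhead]; rfl)
  by_cases hyN : s(y, c) ∈ N
  · exact ⟨s(y, c), by rw [hsplit]; exact List.mem_append_left _ hyedge, by simp, hyN⟩
  · have hzN : s(c, z) ∈ N := by unfold Alt at hrel; tauto
    exact ⟨s(c, z), by rw [hsplit]; exact List.mem_append_right _ hzedge, by simp, hzN⟩


section FlipFacts

set_option linter.unusedSectionVars false

variable {M : Set (Sym2 V)} {u v w : V}
  (hmat : IsMatchingOn G M)
  (hu : ¬ Covers M u) (huv : s(u, v) ∈ G.edgeSet) (hvw : s(v, w) ∈ M)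

include hmat hu huv hvw

lemma hMv : ∀ e ∈ M, v ∈ e → e = s(v, w) :=
  fun e he hv => matched_eq hmat he hvw hv (by simp)

lemma hMw : ∀ e ∈ M, w ∈ e → e = s(v, w) :=
  fun e he hv => matched_eq hmat he hvw hv (by simp)

lemma hMu : ∀ e ∈ M, u ∉ e := fun e he hue => hu ⟨e, he, hue⟩

lemma hne_uv : u ≠ v := (G.mem_edgeSet.mp huv).ne

lemma hne_vw : v ≠ w := (G.mem_edgeSet.mp (hmat.1 hvw)).ne

lemma hne_uw : u ≠ w := by
  intro h
  exact hMu hmat hu huv hvw s(v, w) hvw (by rw [h]; simp)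

lemma huvM : s(u, v) ∉ M := fun h => hMu hmat hu huv hvw _ h (by simp)

lemma huv_ne_vw : s(u, v) ≠ s(v, w) := fun h => huvM hmat hu huv hvw (h ▸ hvw)

lemma hNM : ∀ e : Sym2 V, e ≠ s(u, v) → e ≠ s(v, w) →
    (e ∈ M \ {s(v, w)} ∪ {s(u, v)} ↔ e ∈ M) := by
  intro e h1 h2
  simp [Set.mem_union, Set.mem_diff, Set.mem_singleton_iff, h1, h2]

lemma huvN : s(u, v) ∈ M \ {s(v, w)} ∪ {s(u, v)} := Or.inr rfl

lemma hNv : ∀ e ∈ M \ {s(v, w)} ∪ {s(u, v)}, v ∈ e → e = s(u, v) := by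
  rintro e (⟨heM, hne⟩ | he) hv
  · exact absurd (hMv hmat hu huv hvw e heM hv) hne
  · exact he

lemma hNu : ∀ e ∈ M \ {s(v, w)} ∪ {s(u, v)}, u ∈ e → e = s(u, v) := by
  rintro e (⟨heM, hne⟩ | he) hue
  · exact absurd hue (hMu hmat hu huv hvw e heM)
  · exact he

lemma hNw : ∀ e ∈ M \ {s(v, w)} ∪ {s(u, v)}, w ∉ e := by
  rintro e (⟨heM, hne⟩ | he) hwe
  · exact hne (hMw hmat hu huv hvw e heM hwe)
  · rw [he] at hwe
    rcases Sym2.mem_iff.mp hwe with h | h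
    · exact hne_uw hmat hu huv hvw h.symm
    · exact hne_vw hmat hu huv hvw h.symm

lemma flip_odd (hModd : IsOddMatching G M) :
    IsOddMatching G (M \ {s(v, w)} ∪ {s(u, v)}) ∧ ¬ Covers (M \ {s(v, w)} ∪ {s(u, v)}) w := by
  have hw : ¬ Covers (M \ {s(v, w)} ∪ {s(u, v)}) w := by
    rintro ⟨e, he, hwe⟩
    exact hNw hmat hu huv hvw e he hwe
  refine ⟨⟨⟨?_, ?_⟩, w, hw, ?_⟩, hw⟩
  · rintro e (⟨heM, -⟩ | he)
    · exact hmat.1 heM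
    · rw [he]; exact huv
  · rintro e he f hf hef x hxe hxf
    rcases he with ⟨heM, hene⟩ | he <;> rcases hf with ⟨hfM, hfne⟩ | hf
    · exact hmat.2 e heM f hfM hef x hxe hxf
    · rw [hf] at hxf
      rcases Sym2.mem_iff.mp hxf with rfl | rfl
      · exact hMu hmat hu huv hvw e heM hxe
      · exact hene (hMv hmat hu huv hvw e heM hxe)
    · rw [he] at hxe
      rcases Sym2.mem_iff.mp hxe with rfl | rfl
      · exact hMu hmat hu huv hvw f hfM hxf
      · exact hfne (hMv hmat hu huv hvw f hfM hxf)
    · rw [he, hf] at hef; exact hef rfl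
  · intro y hy
    by_contra hne
    apply hy
    by_cases hyu : y = u
    · exact ⟨s(u, v), huvN hmat hu huv hvw, by rw [hyu]; simp⟩
    by_cases hyv : y = v
    · exact ⟨s(u, v), huvN hmat hu huv hvw, by rw [hyv]; simp⟩
    have hyM : Covers M y := by
      by_contra hcov
      obtain ⟨z, hz, hzu⟩ := hModd.2
      exact hyu ((hzu y hcov).trans (hzu u hu).symm)
    obtain ⟨e, heM, hye⟩ := hyM
    have hene : e ≠ s(v, w) := by
      intro h
      rw [h] at hye
      rcases Sym2.mem_iff.mp hye with h' | h'
      · exact hyv h'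
      · exact hne h'
    exact ⟨e, Or.inl ⟨heM, hene⟩, hye⟩

lemma flip_reach [DecidableEq V] (x : V)
    (hx : x = u ∨ x = v ∨ x = w ∨ ∃ p : G.Walk x w, p.IsPath ∧
      List.Chain' (Alt (M \ {s(v, w)} ∪ {s(u, v)})) p.edges) :
    ∃ q : G.Walk x u, q.IsPath ∧ List.Chain' (Alt M) q.edges := by
  have hadj_uv : G.Adj u v := G.mem_edgeSet.mp huv
  have hadj_vw : G.Adj v w := G.mem_edgeSet.mp (hmat.1 hvw)
  have nuv : u ≠ v := hne_uv hmat hu huv hvw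
  have nvw : v ≠ w := hne_vw hmat hu huv hvw
  have nuw : u ≠ w := hne_uw hmat hu huv hvw
  have hMv' := hMv hmat hu huv hvw
  have hMw' := hMw hmat hu huv hvw
  have hMu' := hMu hmat hu huv hvw
  have huvM' := huvM hmat hu huv hvw
  have hNv' := hNv hmat hu huv hvw
  have hNu' := hNu hmat hu huv hvw
  have hNM' := hNM hmat hu huv hvw
  by_cases hxu : x = u
  · subst hxu; exact ⟨SimpleGraph.Walk.nil, by simp, by simp [List.Chain']⟩
  by_cases hxv : x = v
  · subst hxv
    refine ⟨SimpleGraph.Walk.cons hadj_uv.symm SimpleGraph.Walk.nil, ?_, by simp [List.Chain']⟩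
    rw [SimpleGraph.Walk.cons_isPath_iff]
    exact ⟨SimpleGraph.Walk.IsPath.nil, by simp [Ne.symm nuv]⟩
  by_cases hxw : x = w
  · subst hxw
    refine ⟨SimpleGraph.Walk.cons hadj_vw.symm (SimpleGraph.Walk.cons hadj_uv.symm
      SimpleGraph.Walk.nil), ?_, ?_⟩
    · rw [SimpleGraph.Walk.cons_isPath_iff, SimpleGraph.Walk.cons_isPath_iff]
      refine ⟨⟨SimpleGraph.Walk.IsPath.nil, by simp [Ne.symm nuv]⟩, ?_⟩
      simp [Ne.symm nvw, Ne.symm nuw]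
    · simp only [SimpleGraph.Walk.edges_cons, SimpleGraph.Walk.edges_nil]
      unfold List.Chain'; rw [List.isChain_pair]
      exact iff_of_true (by rw [Sym2.eq_swap]; exact hvw)
        (by rw [Sym2.eq_swap]; exact huvM')
  rcases hx with rfl | rfl | rfl | ⟨p, hp, hch⟩
  · exact absurd rfl hxu
  · exact absurd rfl hxv
  · exact absurd rfl hxw
  have hnodup : p.support.Nodup := (SimpleGraph.Walk.isPath_def p).mp hp
  by_cases hvs : v ∈ p.support
  · -- CASE II : v on the path
    obtain ⟨e0, he0E, hve0, he0N⟩ := exists_matched_edge p hch hvs (fun h => hxv h.symm) nvw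
    have huvE : s(u, v) ∈ p.edges := (hNv' e0 he0N hve0) ▸ he0E
    have hspec : (p.takeUntil v hvs).append (p.dropUntil v hvs) = p := p.take_spec hvs
    set p₁ := p.takeUntil v hvs with hp₁def
    set p₂ := p.dropUntil v hvs with hp₂def
    have hp₁ : p₁.IsPath := hp.takeUntil hvs
    have hp₂ : p₂.IsPath := hp.dropUntil hvs
    have hnd : (p₁.support ++ p₂.support.tail).Nodup := by
      rw [← SimpleGraph.Walk.support_append, hspec]; exact hnodup
    rw [List.nodup_append] at hnd
    have hdisj := hnd.2.2
    have htail₂ : ∀ y, y ∈ p₂.support → y ≠ v → y ∈ p₂.support.tail := by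
      intro y hy hne
      rw [SimpleGraph.Walk.support_eq_cons] at hy
      rcases List.mem_cons.mp hy with h' | h'
      · exact absurd h' hne
      · exact h'
    have hwp₁ : w ∉ p₁.support := fun h =>
      hdisj w h w (htail₂ w p₂.end_mem_support (Ne.symm nvw)) rfl
    have hedges : p.edges = p₁.edges ++ p₂.edges := by
      rw [← SimpleGraph.Walk.edges_append, hspec]
    have hchsplit := List.isChain_append.mp (hedges ▸ hch)
    have hch₁ := hchsplit.1
    have hch₂ := hchsplit.2.1
    rw [hedges] at huvE
    rcases List.mem_append.mp huvE with huv₁ | huv₂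
    · -- IIa : the edge uv lies before v
      have hup₁ : u ∈ p₁.support := p₁.fst_mem_support_of_mem_edges huv₁
      refine ⟨p₁.takeUntil u hup₁, hp₁.takeUntil hup₁, ?_⟩
      have hspec1 : (p₁.takeUntil u hup₁).append (p₁.dropUntil u hup₁) = p₁ :=
        p₁.take_spec hup₁
      have hnd1 : ((p₁.takeUntil u hup₁).support ++ (p₁.dropUntil u hup₁).support.tail).Nodup := by
        rw [← SimpleGraph.Walk.support_append, hspec1]
        exact (SimpleGraph.Walk.isPath_def p₁).mp hp₁
      rw [List.nodup_append] at hnd1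
      have hvt : v ∉ (p₁.takeUntil u hup₁).support := by
        intro h
        refine hnd1.2.2 v h v ?_ rfl
        have hv2 := (p₁.dropUntil u hup₁).end_mem_support
        rw [SimpleGraph.Walk.support_eq_cons] at hv2
        rcases List.mem_cons.mp hv2 with h' | h'
        · exact absurd h'.symm nuv
        · exact h'
      have hchT : List.Chain' (Alt (M \ {s(v, w)} ∪ {s(u, v)})) (p₁.takeUntil u hup₁).edges := by
        have hE : p₁.edges = (p₁.takeUntil u hup₁).edges ++ (p₁.dropUntil u hup₁).edges := by
          rw [← SimpleGraph.Walk.edges_append, hspec1]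
        exact (List.isChain_append.mp (hE ▸ hch₁)).1
      refine chain'_transfer M _ _ ?_ hchT
      intro e he
      refine (hNM' e ?_ ?_).symm
      · intro h; rw [h] at he
        exact hvt ((p₁.takeUntil u hup₁).snd_mem_support_of_mem_edges he)
      · intro h; rw [h] at he
        exact hvt ((p₁.takeUntil u hup₁).fst_mem_support_of_mem_edges he)
    · -- IIb : the edge uv lies after v
      have hup₂ : u ∈ p₂.support := p₂.fst_mem_support_of_mem_edges huv₂
      have hup₂t : u ∈ p₂.support.tail := htail₂ u hup₂ nuv
      have hup₁ : u ∉ p₁.support := fun h => hdisj u h u hup₂t rfl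
      have hspec2 : (p₂.takeUntil u hup₂).append (p₂.dropUntil u hup₂) = p₂ :=
        p₂.take_spec hup₂
      set p₃ := p₂.dropUntil u hup₂ with hp₃def
      set t₂ := p₂.takeUntil u hup₂ with ht₂def
      have hp₃ : p₃.IsPath := hp₂.dropUntil hup₂
      have hnd2 : (t₂.support ++ p₃.support.tail).Nodup := by
        rw [← SimpleGraph.Walk.support_append, hspec2]
        exact (SimpleGraph.Walk.isPath_def p₂).mp hp₂
      rw [List.nodup_append] at hnd2
      have hvp₃ : v ∉ p₃.support := by
        intro h
        have hvt : v ∈ p₃.support.tail := by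
          rw [SimpleGraph.Walk.support_eq_cons] at h
          rcases List.mem_cons.mp h with h' | h'
          · exact absurd h'.symm nuv
          · exact h'
        exact hnd2.2.2 v t₂.start_mem_support v hvt rfl
      have hedges2 : p₂.edges = t₂.edges ++ p₃.edges := by
        rw [← SimpleGraph.Walk.edges_append, hspec2]
      have hch₃ : List.Chain' (Alt (M \ {s(v, w)} ∪ {s(u, v)})) p₃.edges :=
        (List.isChain_append.mp (hedges2 ▸ hch₂)).2.1
      have hch₃M : List.Chain' (Alt M) p₃.edges := by
        refine chain'_transfer M _ _ ?_ hch₃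
        intro e he
        refine (hNM' e ?_ ?_).symm
        · intro h; rw [h] at he; exact hvp₃ (p₃.snd_mem_support_of_mem_edges he)
        · intro h; rw [h] at he; exact hvp₃ (p₃.fst_mem_support_of_mem_edges he)
      have hch₁M : List.Chain' (Alt M) p₁.edges := by
        refine chain'_transfer M _ _ ?_ hch₁
        intro e he
        refine (hNM' e ?_ ?_).symm
        · intro h; rw [h] at he; exact hup₁ (p₁.fst_mem_support_of_mem_edges he)
        · intro h; rw [h] at he; exact hwp₁ (p₁.snd_mem_support_of_mem_edges he)
      refine ⟨p₁.append (SimpleGraph.Walk.cons hadj_vw p₃.reverse), ?_, ?_⟩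
      · rw [SimpleGraph.Walk.isPath_def, SimpleGraph.Walk.support_append,
          SimpleGraph.Walk.support_cons, List.tail_cons, SimpleGraph.Walk.support_reverse]
        rw [List.nodup_append]
        refine ⟨(SimpleGraph.Walk.isPath_def p₁).mp hp₁,
          by rw [List.nodup_reverse]; exact (SimpleGraph.Walk.isPath_def p₃).mp hp₃, ?_⟩
        intro a ha b ha' hab; subst hab
        rw [List.mem_reverse] at ha'
        have hav : a ≠ v := fun h => hvp₃ (h ▸ ha')
        exact hdisj a ha a (htail₂ a (p₂.support_dropUntil_subset hup₂ ha') hav) rfl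
      · rw [SimpleGraph.Walk.edges_append, SimpleGraph.Walk.edges_cons]
        unfold List.Chain'; rw [List.isChain_append]
        refine ⟨hch₁M, ?_, ?_⟩
        · rw [List.isChain_cons]
          constructor
          · intro f hf
            obtain ⟨z, hz, hzE, hzhead⟩ := exists_head_edge p₃.reverse (Ne.symm nuw)
            rw [hzhead] at hf
            have hf' : s(w, z) = f := Option.mem_some_iff.mp hf
            rw [← hf']
            have hz₃ : z ∈ p₃.support := by
              rwa [SimpleGraph.Walk.support_reverse, List.mem_reverse] at hz
            refine iff_of_true hvw ?_
            intro hmem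
            have heq := hMw' s(w, z) hmem (by simp)
            rw [Sym2.eq_iff] at heq
            rcases heq with ⟨h1, h2⟩ | ⟨h1, h2⟩
            · exact nvw h1.symm
            · exact hvp₃ (h2 ▸ hz₃)
          · rw [SimpleGraph.Walk.edges_reverse]
            exact chain'_alt_reverse hch₃M
        · intro e he f hf
          rw [List.head?_cons] at hf
          have hf' : s(v, w) = f := Option.mem_some_iff.mp hf
          obtain ⟨y, hy, hyE, hylast⟩ := exists_getLast_edge p₁ hxv
          rw [hylast] at he
          have he' : s(y, v) = e := Option.mem_some_iff.mp he
          rw [← he', ← hf']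
          refine iff_of_false ?_ (not_not_intro hvw)
          intro hmem
          have heq := hMv' s(y, v) hmem (by simp)
          rw [Sym2.eq_iff] at heq
          rcases heq with ⟨h1, h2⟩ | ⟨h1, h2⟩
          · exact nvw h2
          · exact hwp₁ (h1 ▸ hy)
  · -- CASE I : v not on the path
    have hus : u ∉ p.support := by
      intro h
      obtain ⟨e, heE, hue, heN⟩ := exists_matched_edge p hch h (fun h' => hxu h'.symm) nuw
      rw [hNu' e heN hue] at heE
      exact hvs (p.snd_mem_support_of_mem_edges heE)
    have hchM : List.Chain' (Alt M) p.edges := by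
      refine chain'_transfer M _ _ ?_ hch
      intro e he
      refine (hNM' e ?_ ?_).symm
      · intro h; rw [h] at he; exact hvs (p.snd_mem_support_of_mem_edges he)
      · intro h; rw [h] at he; exact hvs (p.fst_mem_support_of_mem_edges he)
    refine ⟨p.append (SimpleGraph.Walk.cons hadj_vw.symm (SimpleGraph.Walk.cons hadj_uv.symm
      SimpleGraph.Walk.nil)), ?_, ?_⟩
    · rw [SimpleGraph.Walk.isPath_def, SimpleGraph.Walk.support_append,
        SimpleGraph.Walk.support_cons, List.tail_cons]
      simp only [SimpleGraph.Walk.support_cons, SimpleGraph.Walk.support_nil]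
      rw [List.nodup_append]
      refine ⟨hnodup, by simp [Ne.symm nuv], ?_⟩
      intro a ha b ha' hab; subst hab
      rcases (by simpa using ha' : a = v ∨ a = u) with rfl | rfl
      · exact hvs ha
      · exact hus ha
    · rw [SimpleGraph.Walk.edges_append]
      simp only [SimpleGraph.Walk.edges_cons, SimpleGraph.Walk.edges_nil]
      unfold List.Chain'; rw [List.isChain_append]
      refine ⟨hchM, ?_, ?_⟩
      · rw [List.isChain_pair]
        exact iff_of_true (by rw [Sym2.eq_swap]; exact hvw)
          (by rw [Sym2.eq_swap]; exact huvM')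
      · intro e he f hf
        rw [List.head?_cons] at hf
        have hf' : s(w, v) = f := Option.mem_some_iff.mp hf
        obtain ⟨y, hy, hyE, hylast⟩ := exists_getLast_edge p hxw
        rw [hylast] at he
        have he' : s(y, w) = e := Option.mem_some_iff.mp he
        rw [← he', ← hf']
        refine iff_of_false ?_ (not_not_intro (by rw [Sym2.eq_swap]; exact hvw))
        intro hmem
        have heq := hMw' s(y, w) hmem (by simp)
        rw [Sym2.eq_iff] at heq
        rcases heq with ⟨h1, h2⟩ | ⟨h1, h2⟩
        · exact hvs (h1 ▸ hy)
        · exact nvw h2.symm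

end FlipFacts

end Stmt4Aux

namespace Stmt4Aux

variable {V : Type*} {G : SimpleGraph V}

lemma key [DecidableEq V] {M M' : Set (Sym2 V)} (hrec : Reconfig G M M') :
    ∀ (_ : IsOddMatching G M) (u : V), ¬ Covers M u →
      ∀ e ∈ symmDiff M M', ∀ x ∈ e,
        ∃ q : G.Walk x u, q.IsPath ∧ List.Chain' (Alt M) q.edges := by
  unfold Reconfig at hrec
  induction hrec using Relation.ReflTransGen.head_induction_on with
  | refl =>
    intro _ u _ e he x hx
    rw [symmDiff_self] at he
    exact absurd he (by simp)
  | @head A B hstep hrest ih =>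
    intro hM u hu e he x hx
    obtain ⟨-, u₀, v, w, hu₀, huv, hvw, hNdef⟩ := hstep
    subst hNdef
    have hu₀u : u₀ = u := by
      obtain ⟨z, hz, hzu⟩ := hM.2
      rw [hzu u₀ hu₀, hzu u hu]
    subst hu₀u
    obtain ⟨hNodd, hwN⟩ := flip_odd hM.1 hu huv hvw hM
    by_cases he1 : e = s(u₀, v)
    · subst he1
      rcases Sym2.mem_iff.mp hx with rfl | rfl
      · exact flip_reach hM.1 hu huv hvw _ (Or.inl rfl)
      · exact flip_reach hM.1 hu huv hvw _ (Or.inr (Or.inl rfl))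
    by_cases he2 : e = s(v, w)
    · subst he2
      rcases Sym2.mem_iff.mp hx with rfl | rfl
      · exact flip_reach hM.1 hu huv hvw _ (Or.inr (Or.inl rfl))
      · exact flip_reach hM.1 hu huv hvw _ (Or.inr (Or.inr (Or.inl rfl)))
    have heN : e ∈ symmDiff (A \ {s(v, w)} ∪ {s(u₀, v)}) M' := by
      rw [Set.mem_symmDiff] at he ⊢
      have hmm : e ∈ A \ {s(v, w)} ∪ {s(u₀, v)} ↔ e ∈ A :=
        hNM hM.1 hu huv hvw e he1 he2
      tauto
    obtain ⟨p, hp, hch⟩ := ih hNodd w hwN e heN x hx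
    exact flip_reach hM.1 hu huv hvw x (Or.inr (Or.inr (Or.inr ⟨p, hp, hch⟩)))

end Stmt4Aux

/-- If the odd matching `M` (with isolated vertex `vM`) can be reconfigured to `M'`,
then for every cycle of `G` all of whose edges lie in `M △ M'` there is a vertex `v`
on the cycle admitting an `M`-alternating path from `v` to `vM`. -/
theorem stmt4 {V : Type*} [Fintype V] (G : SimpleGraph V) (M M' : Set (Sym2 V))
    (hM : IsOddMatching G M) (hM' : IsOddMatching G M')
    (vM : V) (hvM : ¬ Covers M vM)
    (hrec : Reconfig G M M')
    (a : V) (C : G.Walk a a) (hC : C.IsCycle)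
    (hCe : ∀ e ∈ C.edges, e ∈ symmDiff M M') :
    ∃ v ∈ C.support, ∃ p : G.Walk v vM, p.IsPath ∧
      List.Chain' (fun e f => (e ∈ M ↔ f ∉ M)) p.edges := by
  classical
  have h3 := hC.three_le_length
  have hne : C.edges ≠ [] := by
    intro h
    have hlen := C.length_edges
    rw [h] at hlen
    simp at hlen
    omega
  obtain ⟨e, he⟩ := List.exists_mem_of_ne_nil _ hne
  have hkey := Stmt4Aux.key hrec hM vM hvM
  revert he
  induction e using Sym2.ind with
  | _ y z =>
    intro he
    obtain ⟨q, hq, hch⟩ := hkey _ (hCe _ he) y (by simp)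
    exact ⟨y, C.fst_mem_support_of_mem_edges he, q, hq, hch⟩
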